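/- Let b > 0 and let ρ : [0,b] → ℝ be continuous with ρ(0) ≤ 0. Suppose there exist constants ε > 0 and C > 0 such that for every t ∈ [0,b) with 0 < ρ(t) ≤ ε, the upper right Dini derivative D⁺ρ(t) := limsup_{h→0⁺} (ρ(t+h) − ρ(t))/h satisfies D⁺ρ(t) ≤ C ρ(t). Then ρ(b) ≤ 0. -/

import Mathlib

open Filter

/-- The upper right Dini derivative `D⁺ρ(t) = limsup_{h→0⁺} (ρ(t+h) − ρ(t))/h`,
as an extended real number. -/
noncomputable def upperRightDini (ρ : ℝ → ℝ) (t : ℝ) : EReal :=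
  Filter.limsup (fun h : ℝ => (((ρ (t + h) - ρ t) / h : ℝ) : EReal))
    (nhdsWithin 0 (Set.Ioi 0))

lemma freq_slope_of_dini_lt (ρ : ℝ → ℝ) (x r : ℝ)
    (h : upperRightDini ρ x < ((r : ℝ) : EReal)) :
    ∃ᶠ z in nhdsWithin x (Set.Ioi x), slope ρ x z < r := by
  have h1 : ∀ᶠ u in nhdsWithin (0:ℝ) (Set.Ioi 0),
      (((ρ (x + u) - ρ x) / u : ℝ) : EReal) < ((r : ℝ) : EReal) :=
    eventually_lt_of_limsup_lt h
  have h2 : Tendsto (fun z : ℝ => z - x) (nhdsWithin x (Set.Ioi x))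
      (nhdsWithin (0:ℝ) (Set.Ioi 0)) := by
    apply tendsto_nhdsWithin_of_tendsto_nhds_of_eventually_within
    · have : Tendsto (fun z : ℝ => z - x) (nhds x) (nhds (x - x)) :=
        (continuous_id.sub continuous_const).tendsto x
      simpa using this.mono_left nhdsWithin_le_nhds
    · filter_upwards [self_mem_nhdsWithin] with z hz
      simpa [Set.mem_Ioi, sub_pos] using hz
  have h3 := h2.eventually h1
  have h4 : ∀ᶠ z in nhdsWithin x (Set.Ioi x), slope ρ x z < r := by
    filter_upwards [h3] with z hz
    have : ((ρ (x + (z - x)) - ρ x) / (z - x) : ℝ) < r := by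
      exact_mod_cast hz
    simpa [slope_def_field, div_eq_iff, add_sub_cancel] using this
  exact h4.frequently

theorem dini_upper_right_comparison
    (b : ℝ) (hb : 0 < b) (ρ : ℝ → ℝ)
    (hcont : ContinuousOn ρ (Set.Icc 0 b)) (h0 : ρ 0 ≤ 0)
    (ε C : ℝ) (hε : 0 < ε) (hC : 0 < C)
    (hdini : ∀ t ∈ Set.Ico (0 : ℝ) b, 0 < ρ t → ρ t ≤ ε →
      upperRightDini ρ t ≤ ((C * ρ t : ℝ) : EReal)) :
    ρ b ≤ 0 := by
  by_contra hρb
  push_neg at hρb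
  -- the last time ρ is nonpositive
  set S : Set ℝ := Set.Icc 0 b ∩ ρ ⁻¹' Set.Iic 0 with hS
  have hS0 : (0:ℝ) ∈ S := ⟨⟨le_refl 0, hb.le⟩, by simpa using h0⟩
  have hSne : S.Nonempty := ⟨0, hS0⟩
  have hSbdd : BddAbove S := ⟨b, fun x hx => hx.1.2⟩
  have hSclosed : IsClosed S :=
    hcont.preimage_isClosed_of_isClosed isClosed_Icc isClosed_Iic
  set s := sSup S with hs_def
  have hsS : s ∈ S := hSclosed.csSup_mem hSne hSbdd
  have hs0 : 0 ≤ s := hsS.1.1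
  have hsb : s ≤ b := hsS.1.2
  have hρs : ρ s ≤ 0 := hsS.2
  have hsb' : s < b := lt_of_le_of_ne hsb (fun h => absurd hρs (by rw [h]; exact not_le.2 hρb))
  -- ρ is positive on (s, b]
  have hpos : ∀ t, s < t → t ≤ b → 0 < ρ t := by
    intro t hst htb
    by_contra h
    push_neg at h
    have : t ∈ S := ⟨⟨hs0.trans hst.le, htb⟩, h⟩
    exact absurd (le_csSup hSbdd this) (not_le.2 hst)
  -- first time after s where ρ reaches ε (or b)
  set U : Set ℝ := (Set.Icc s b ∩ ρ ⁻¹' Set.Ici ε) ∪ {b} with hU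
  have hUne : U.Nonempty := ⟨b, Or.inr rfl⟩
  have hUbdd : BddBelow U := by
    refine ⟨s, fun x hx => ?_⟩
    rcases hx with ⟨⟨h1, _⟩, _⟩ | h
    · exact h1
    · simp only [Set.mem_singleton_iff] at h; subst h; exact hsb
  have hUclosed : IsClosed U := by
    apply IsClosed.union _ isClosed_singleton
    exact (hcont.mono (Set.Icc_subset_Icc hs0 le_rfl)).preimage_isClosed_of_isClosed
      isClosed_Icc isClosed_Ici
  set t₁ := sInf U with ht₁_def
  have ht₁U : t₁ ∈ U := hUclosed.csInf_mem hUne hUbdd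
  have hst₁ : s ≤ t₁ := le_csInf hUne (fun x hx => by
    rcases hx with ⟨⟨h1, _⟩, _⟩ | h
    · exact h1
    · simp only [Set.mem_singleton_iff] at h; subst h; exact hsb)
  have ht₁b : t₁ ≤ b := csInf_le hUbdd (Or.inr rfl)
  have hst₁' : s < t₁ := by
    rcases lt_or_eq_of_le hst₁ with h | h
    · exact h
    rcases ht₁U with ⟨⟨_, _⟩, hρ⟩ | hbb
    · exfalso
      rw [← h] at hρ
      exact absurd (le_trans (Set.mem_Ici.1 hρ) hρs) (not_le.2 hε)
    · simp only [Set.mem_singleton_iff] at hbb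
      rw [hbb] at h; exact absurd h (ne_of_lt hsb')
  -- ρ < ε on [s, t₁)
  have hlt_eps : ∀ x ∈ Set.Ico s t₁, ρ x < ε := by
    intro x ⟨hx1, hx2⟩
    by_contra h
    push_neg at h
    have hxU : x ∈ U := Or.inl ⟨⟨hx1, hx2.le.trans ht₁b⟩, h⟩
    exact absurd (csInf_le hUbdd hxU) (not_le.2 hx2)
  have hρt₁pos : 0 < ρ t₁ := hpos t₁ hst₁' ht₁b
  -- key estimate: ρ t₁ ≤ δ * exp (2*C*b) for every δ > 0
  have key : ∀ δ : ℝ, 0 < δ → ρ t₁ ≤ δ * Real.exp (2 * C * b) := by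
    intro δ hδ
    -- choose a' ∈ (s, t₁) with ρ a' < δ
    obtain ⟨a', ha'⟩ : ∃ a', a' ∈ Set.Ioo s t₁ ∧ ρ a' < δ := by
      have hcs : ContinuousWithinAt ρ (Set.Icc 0 b) s :=
        hcont s ⟨hs0, hsb⟩
      have hlt : ∀ᶠ z in nhdsWithin s (Set.Icc 0 b), ρ z < δ :=
        hcs.eventually_lt_const (lt_of_le_of_lt hρs hδ)
      have hsub : Set.Ioo s t₁ ⊆ Set.Icc 0 b := fun z hz =>
        ⟨hs0.trans hz.1.le, hz.2.le.trans ht₁b⟩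
      have hlt' : ∀ᶠ z in nhdsWithin s (Set.Ioo s t₁), ρ z < δ :=
        hlt.filter_mono (nhdsWithin_mono s hsub)
      have hne : (nhdsWithin s (Set.Ioo s t₁)).NeBot := by
        apply mem_closure_iff_nhdsWithin_neBot.1
        rw [closure_Ioo (ne_of_lt hst₁')]
        exact ⟨le_refl s, hst₁'.le⟩
      obtain ⟨z, hz1, hz2⟩ := (hlt'.and self_mem_nhdsWithin).exists
      exact ⟨z, hz2, hz1⟩
    obtain ⟨⟨hsa', ha't₁⟩, hρa'⟩ := ha'
    have ha'0 : 0 ≤ a' := hs0.trans hsa'.le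
    -- apply the fencing lemma on [a', t₁] with barrier δ * exp (2C(t - a'))
    set B : ℝ → ℝ := fun t => δ * Real.exp (2 * C * (t - a')) with hB
    set B' : ℝ → ℝ := fun t => 2 * C * (δ * Real.exp (2 * C * (t - a'))) with hB'
    have hBderiv : ∀ t : ℝ, HasDerivAt B (B' t) t := by
      intro t
      have h1 : HasDerivAt (fun t : ℝ => 2 * C * (t - a')) (2 * C) t := by
        simpa using ((hasDerivAt_id t).sub_const a').const_mul (2 * C)
      have h2 := (h1.exp).const_mul δ
      convert h2 using 1
      · rfl
      · rfl
      simp [hB']; ring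
    have hρcont : ContinuousOn ρ (Set.Icc a' t₁) :=
      hcont.mono (Set.Icc_subset_Icc ha'0 ht₁b)
    have main : ∀ ⦃x⦄, x ∈ Set.Icc a' t₁ → ρ x ≤ B x := by
      apply image_le_of_liminf_slope_right_lt_deriv_boundary (f' := fun x => C * ρ x)
        hρcont ?_ ?_ hBderiv ?_
      · -- hf'
        intro x hx r hr
        have hxs : s < x := hsa'.trans_le hx.1
        have hx0 : 0 < ρ x := hpos x hxs (hx.2.le.trans ht₁b)
        have hxε : ρ x ≤ ε := (hlt_eps x ⟨hxs.le, hx.2⟩).le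
        have hxIco : x ∈ Set.Ico (0:ℝ) b := ⟨hs0.trans hxs.le, lt_of_lt_of_le hx.2 ht₁b⟩
        have hd := hdini x hxIco hx0 hxε
        have : upperRightDini ρ x < ((r : ℝ) : EReal) :=
          lt_of_le_of_lt hd (by exact_mod_cast hr)
        exact freq_slope_of_dini_lt ρ x r this
      · -- f a' ≤ B a'
        simp only [hB, sub_self, mul_zero, Real.exp_zero, mul_one]
        exact hρa'.le
      · -- bound at contact points
        intro x hx hcontact
        have hxs : s < x := hsa'.trans_le hx.1
        have hx0 : 0 < ρ x := hpos x hxs (hx.2.le.trans ht₁b)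
        have h' : ρ x = δ * Real.exp (2 * C * (x - a')) := hcontact
        show C * ρ x < 2 * C * (δ * Real.exp (2 * C * (x - a')))
        nlinarith
    have h1 : ρ t₁ ≤ B t₁ := main ⟨ha't₁.le, le_refl t₁⟩
    have h2 : B t₁ ≤ δ * Real.exp (2 * C * b) := by
      have : t₁ - a' ≤ b := by linarith
      have := Real.exp_le_exp.2 (by nlinarith : 2 * C * (t₁ - a') ≤ 2 * C * b)
      simp only [hB]
      nlinarith [Real.exp_pos (2 * C * (t₁ - a'))]
    exact h1.trans h2
  -- conclude
  have hK : 0 < Real.exp (2 * C * b) := Real.exp_pos _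
  have hthis := key (ρ t₁ / (2 * Real.exp (2 * C * b))) (by positivity)
  have heq : ρ t₁ / (2 * Real.exp (2 * C * b)) * Real.exp (2 * C * b) = ρ t₁ / 2 := by
    field_simp
  rw [heq] at hthis
  linarith
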